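/- Let 0 < q < 1 and 0 < λ ≤ 1/(1-q). Then for all integers j ≥ 0, ∏_{s=1}^{j} (q^s + λ(1-q))^{-1} ≥ ∏_{s=1}^{∞} (1 + q^s)^{-1} > 0. Consequently there is a constant C > 0 such that the q-exponential density f(t) = λ e_q(-λ t) satisfies f(q^{-j}) ≥ C q^{j(j+1)/2} for all j ≥ 0. -/

import Mathlib

open Finset

private lemma gauss_aux (j : ℕ) : ∑ s ∈ Finset.range j, (s + 1) = j * (j + 1) / 2 := by
  have h : ∑ s ∈ Finset.range j, (s + 1) = ∑ i ∈ Finset.range (j + 1), i := by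
    rw [Finset.sum_range_succ' (fun i => i) j]; simp
  rw [h, Finset.sum_range_id, Nat.add_sub_cancel, Nat.mul_comm]

private lemma prod_Icc_one_eq (h : ℕ → ℝ) (j : ℕ) :
    ∏ t ∈ Finset.Icc 1 j, h t = ∏ s ∈ Finset.range j, h (s + 1) := by
  induction j with
  | zero => simp
  | succ n ih =>
      rw [Finset.prod_Icc_succ_top (by omega), ih, Finset.prod_range_succ]

/-- Multipliability, positivity, and boundedness of `∏ (1 + a n)⁻¹`. -/
private lemma inv_one_add_facts (a : ℕ → ℝ) (h0 : ∀ n, 0 ≤ a n) (hs : Summable a) :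
    Multipliable (fun n => (1 + a n)⁻¹) ∧ 0 < ∏' n, (1 + a n)⁻¹ ∧ (∏' n, (1 + a n)⁻¹) ≤ 1 := by
  have hpos : ∀ (x : Unit) n, 0 < (1 + a n)⁻¹ := by
    intro _ n
    have : (0:ℝ) < 1 + a n := by linarith [h0 n]
    positivity
  have hlogsum : ∀ (x : Unit), Summable fun n => Real.log ((1 + a n)⁻¹) := by
    intro _
    have h1 : Summable fun n => Real.log (1 + a n) := by
      apply Summable.of_nonneg_of_le (fun n => Real.log_nonneg (by linarith [h0 n])) _ hs
      intro n
      have := Real.log_le_sub_one_of_pos (x := 1 + a n) (by linarith [h0 n])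
      linarith
    simpa [Real.log_inv] using h1.neg
  refine ⟨Real.multipliable_of_summable_log (hpos ()) (hlogsum ()), ?_, ?_⟩
  · have := Real.rexp_tsum_eq_tprod (hpos ()) (hlogsum ())
    rw [← this]
    exact Real.exp_pos _
  · have := Real.rexp_tsum_eq_tprod (hpos ()) (hlogsum ())
    rw [← this]
    rw [Real.exp_le_one_iff]
    apply tsum_nonpos
    intro n
    rw [Real.log_inv]
    simp only [neg_nonpos]
    exact Real.log_nonneg (by linarith [h0 n])

/-- The infinite product is at most any initial partial product. -/
private lemma tprod_le_prod_range (a : ℕ → ℝ) (h0 : ∀ n, 0 ≤ a n) (hs : Summable a) (j : ℕ) :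
    ∏' n, (1 + a n)⁻¹ ≤ ∏ n ∈ Finset.range j, (1 + a n)⁻¹ := by
  have hs' : Summable fun n => a (n + j) := (summable_nat_add_iff j).2 hs
  obtain ⟨hm, hp, hT1⟩ := inv_one_add_facts (fun n => a (n + j)) (fun n => h0 _) hs'
  have hsplit := Multipliable.prod_mul_tprod_nat_mul' (f := fun n => (1 + a n)⁻¹) (k := j) hm
  have hPpos : 0 < ∏ n ∈ Finset.range j, (1 + a n)⁻¹ := by
    apply Finset.prod_pos
    intro i _
    have : (0:ℝ) < 1 + a i := by linarith [h0 i]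
    positivity
  calc ∏' n, (1 + a n)⁻¹ = (∏ n ∈ Finset.range j, (1 + a n)⁻¹) * ∏' n, (1 + a (n + j))⁻¹ :=
        hsplit.symm
    _ ≤ (∏ n ∈ Finset.range j, (1 + a n)⁻¹) * 1 := by
        exact mul_le_mul_of_nonneg_left hT1 hPpos.le
    _ = ∏ n ∈ Finset.range j, (1 + a n)⁻¹ := mul_one _

/-- For 0 < λ ≤ 1/(1-q) the q-exponential density has heavy tail:
A_j ≥ ∏_{s=1}^∞ (1+q^s)⁻¹ > 0, hence f(q^{-j}) ≥ C q^{j(j+1)/2}. -/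
theorem q_exponential_heavy_tail (q : ℝ) (hq0 : 0 < q) (hq1 : q < 1)
    (lam : ℝ) (hlam0 : 0 < lam) (hlam : lam ≤ 1 / (1 - q)) :
    (∀ j : ℕ, (∏' s : ℕ, (1 + q ^ (s + 1))⁻¹) ≤
        ∏ s ∈ Finset.Icc 1 j, (q ^ s + lam * (1 - q))⁻¹) ∧
    0 < ∏' s : ℕ, (1 + q ^ (s + 1))⁻¹ ∧
    ∃ C > 0, ∀ j : ℕ,
      C * q ^ (j * (j + 1) / 2) ≤
        lam * ∏' s : ℕ, (1 + lam * q ^ (-(j : ℤ)) * (1 - q) * q ^ s)⁻¹ := by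
  have h1q : 0 < 1 - q := by linarith
  have hL0 : 0 < lam * (1 - q) := by positivity
  have hL1 : lam * (1 - q) ≤ 1 := by
    rw [le_div_iff₀ h1q] at hlam; linarith
  -- the sequence for P
  have ha0 : ∀ n : ℕ, (0:ℝ) ≤ q ^ (n + 1) := fun n => by positivity
  have hasum : Summable fun n : ℕ => q ^ (n + 1) := by
    have : Summable fun n : ℕ => q ^ n := summable_geometric_of_lt_one hq0.le hq1
    exact (summable_nat_add_iff 1).2 this
  obtain ⟨hPm, hPpos, -⟩ := inv_one_add_facts _ ha0 hasum
  set P : ℝ := ∏' s : ℕ, (1 + q ^ (s + 1))⁻¹ with hP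
  -- Part 1
  have part1 : ∀ j : ℕ, P ≤ ∏ s ∈ Finset.Icc 1 j, (q ^ s + lam * (1 - q))⁻¹ := by
    intro j
    have step1 : P ≤ ∏ n ∈ Finset.range j, (1 + q ^ (n + 1))⁻¹ :=
      tprod_le_prod_range _ ha0 hasum j
    have step2 : ∏ n ∈ Finset.range j, (1 + q ^ (n + 1))⁻¹ ≤
        ∏ s ∈ Finset.Icc 1 j, (q ^ s + lam * (1 - q))⁻¹ := by
      rw [prod_Icc_one_eq]
      apply Finset.prod_le_prod
      · intro i _
        have : (0:ℝ) < 1 + q ^ (i + 1) := by positivity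
        positivity
      · intro i _
        apply inv_anti₀
        · positivity
        · have : (0:ℝ) ≤ q ^ (i + 1) := by positivity
          linarith
    exact step1.trans step2
  refine ⟨part1, hPpos, ?_⟩
  -- Q : tail product
  have hb0 : ∀ n : ℕ, (0:ℝ) ≤ lam * (1 - q) * q ^ n := fun n => by positivity
  have hbsum : Summable fun n : ℕ => lam * (1 - q) * q ^ n :=
    (summable_geometric_of_lt_one hq0.le hq1).mul_left _
  obtain ⟨hQm, hQpos, -⟩ := inv_one_add_facts _ hb0 hbsum
  set Q : ℝ := ∏' s : ℕ, (1 + lam * (1 - q) * q ^ s)⁻¹ with hQdef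
  refine ⟨lam * P * Q, by positivity, ?_⟩
  intro j
  have hqj : (0:ℝ) < q ^ j := by positivity
  have hqzj : q ^ (-(j:ℤ)) = (q ^ j)⁻¹ := by
    rw [zpow_neg, zpow_natCast]
  -- the sequence for the j-shifted product
  set c : ℕ → ℝ := fun s => lam * q ^ (-(j:ℤ)) * (1 - q) * q ^ s with hc
  have hc0 : ∀ n, (0:ℝ) ≤ c n := by
    intro n
    have : (0:ℝ) < q ^ (-(j:ℤ)) := by rw [hqzj]; positivity
    simp only [hc]; positivity
  have hcsum : Summable c :=
    (summable_geometric_of_lt_one hq0.le hq1).mul_left _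
  -- shifted factors equal Q's factors
  have hshift : ∀ s : ℕ, (1 + c (s + j))⁻¹ = (1 + lam * (1 - q) * q ^ s)⁻¹ := by
    intro s
    congr 1
    simp only [hc]
    rw [hqzj, pow_add]
    field_simp
  obtain ⟨hcm, -, -⟩ := inv_one_add_facts c hc0 hcsum
  have hcm' : Multipliable fun s => (1 + c (s + j))⁻¹ := by
    apply Multipliable.congr hQm
    intro s; exact (hshift s).symm
  have hsplit := Multipliable.prod_mul_tprod_nat_mul' (f := fun s => (1 + c s)⁻¹) (k := j) hcm'
  have htail : (∏' s, (1 + c (s + j))⁻¹) = Q := by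
    rw [hQdef]; exact tprod_congr hshift
  -- the initial block
  have hblock : ∀ s ∈ Finset.range j, (1 + c s)⁻¹ = q ^ (j - s) * (q ^ (j - s) + lam * (1 - q))⁻¹ := by
    intro s hs
    rw [Finset.mem_range] at hs
    have hd : (0:ℝ) < q ^ (j - s) + lam * (1 - q) := by positivity
    have key : 1 + c s = (q ^ (j - s) + lam * (1 - q)) / q ^ (j - s) := by
      simp only [hc]
      rw [hqzj]
      have hjs : q ^ (j - s) * q ^ s = q ^ j := by
        rw [← pow_add]; congr 1; omega
      field_simp
      nlinarith [hjs, pow_pos hq0 (j - s), pow_pos hq0 s, pow_pos hq0 j]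
    rw [key]
    rw [inv_div]
    rw [div_eq_mul_inv]
  have hprodblock : ∏ s ∈ Finset.range j, (1 + c s)⁻¹ =
      q ^ (j * (j + 1) / 2) * ∏ t ∈ Finset.Icc 1 j, (q ^ t + lam * (1 - q))⁻¹ := by
    rw [Finset.prod_congr rfl hblock, Finset.prod_mul_distrib, Finset.prod_pow_eq_pow_sum]
    congr 1
    · congr 1
      have := Finset.sum_range_reflect (fun i => i + 1) j
      have heq : ∀ s ∈ Finset.range j, j - s = (j - 1 - s) + 1 := by
        intro s hs; rw [Finset.mem_range] at hs; omega
      rw [Finset.sum_congr rfl heq, this, gauss_aux]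
    · rw [prod_Icc_one_eq]
      have := Finset.prod_range_reflect (fun i => (q ^ (i + 1) + lam * (1 - q))⁻¹) j
      rw [← this]
      apply Finset.prod_congr rfl
      intro s hs
      rw [Finset.mem_range] at hs
      have hjs : j - s = (j - 1 - s) + 1 := by omega
      rw [hjs]
  -- assemble
  have hfull : (∏' s, (1 + c s)⁻¹) =
      (q ^ (j * (j + 1) / 2) * ∏ t ∈ Finset.Icc 1 j, (q ^ t + lam * (1 - q))⁻¹) * Q := by
    rw [← hsplit, htail, hprodblock]
  have hIcc : P ≤ ∏ t ∈ Finset.Icc 1 j, (q ^ t + lam * (1 - q))⁻¹ := part1 j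
  have hE : (0:ℝ) < q ^ (j * (j + 1) / 2) := by positivity
  calc lam * P * Q * q ^ (j * (j + 1) / 2)
      ≤ lam * (∏ t ∈ Finset.Icc 1 j, (q ^ t + lam * (1 - q))⁻¹) * Q * q ^ (j * (j + 1) / 2) := by
        gcongr
    _ = lam * ((q ^ (j * (j + 1) / 2) * ∏ t ∈ Finset.Icc 1 j, (q ^ t + lam * (1 - q))⁻¹) * Q) := by
        ring
    _ = lam * ∏' s, (1 + c s)⁻¹ := by rw [hfull]
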